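/- arXiv:2210.00429 — 2 statements merged into one kernel-verified Lean document; each statement's English description precedes it below -/
import Mathlib

section
/- Let Q(R) = Σ_{i=1}^N max_{1≤j≤M} [∠(R s_i, c_j) ≤ α_ε] and let Q̄(B) = Σ_{i=1}^N max_{1≤j≤M} [∠(R_u s_i, c_j) ≤ α_ε + α_B], where B is a cube with center u and half-diagonal α_B. Then Q̄(B) ≥ max_{r ∈ B} Q(R_r). -/
open scoped Matrix
open InnerProductGeometry
noncomputable section

abbrev E3 := EuclideanSpace ℝ (Fin 3)

/-- Skew-symmetric cross-product matrix of `r`. -/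
def skew (r : E3) : Matrix (Fin 3) (Fin 3) ℝ :=
  !![0, -r 2, r 1; r 2, 0, -r 0; -r 1, r 0, 0]

attribute [local instance] Matrix.linftyOpNormedRing Matrix.linftyOpNormedAlgebra in
/-- Axis-angle (exponential) map: rotation by angle `‖r‖` about axis `r/‖r‖`. -/
def axisAngleRot (r : E3) : Matrix (Fin 3) (Fin 3) ℝ :=
  NormedSpace.exp (skew r)

/-- Action of a `3×3` matrix on a vector of `EuclideanSpace ℝ (Fin 3)`. -/
def rotApply (R : Matrix (Fin 3) (Fin 3) ℝ) (s : E3) : E3 :=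
  (EuclideanSpace.equiv (Fin 3) ℝ).symm (R.mulVec (EuclideanSpace.equiv (Fin 3) ℝ s))

section Geo
open Real
variable {V : Type*} [NormedAddCommGroup V] [InnerProductSpace ℝ V]
local notation "⟪" x ", " y "⟫" => @inner ℝ _ _ x y

lemma angle_eq_arccos_unit {x y : V} (hx : ‖x‖ = 1) (hy : ‖y‖ = 1) :
    angle x y = Real.arccos ⟪x, y⟫ := by
  rw [InnerProductGeometry.angle, hx, hy]; norm_num

lemma unit_angle_triangle {x y z : V} (hx : ‖x‖ = 1) (hy : ‖y‖ = 1) (hz : ‖z‖ = 1) :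
    angle x z ≤ angle x y + angle y z := by
  by_cases hp : π ≤ angle x y + angle y z
  · exact (angle_le_pi x z).trans hp
  push_neg at hp
  have ha0 := angle_nonneg x y
  have hb0 := angle_nonneg y z
  have haπ := angle_le_pi x y
  have hbπ := angle_le_pi y z
  have hcosa : Real.cos (angle x y) = ⟪x, y⟫ := by rw [cos_angle, hx, hy]; norm_num
  have hcosb : Real.cos (angle y z) = ⟪y, z⟫ := by rw [cos_angle, hy, hz]; norm_num
  set x' := x - ⟪x, y⟫ • y with hx'
  set z' := z - ⟪z, y⟫ • y with hz'
  have hnx' : ‖x'‖ ^ 2 = 1 - ⟪x, y⟫ ^ 2 := by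
    rw [hx', @norm_sub_sq_real]
    simp [inner_smul_right, norm_smul, hx, hy, real_inner_comm]
    ring
  have hnz' : ‖z'‖ ^ 2 = 1 - ⟪z, y⟫ ^ 2 := by
    rw [hz', @norm_sub_sq_real]
    simp [inner_smul_right, norm_smul, hz, hy, real_inner_comm]
    ring
  have hsina : Real.sin (angle x y) = ‖x'‖ := by
    rw [Real.sin_eq_sqrt_one_sub_cos_sq ha0 haπ, hcosa, ← hnx', Real.sqrt_sq (norm_nonneg _)]
  have hsinb : Real.sin (angle y z) = ‖z'‖ := by
    rw [Real.sin_eq_sqrt_one_sub_cos_sq hb0 hbπ, hcosb, real_inner_comm z y, ← hnz',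
      Real.sqrt_sq (norm_nonneg _)]
  have hdec : ⟪x, z⟫ = ⟪x, y⟫ * ⟪z, y⟫ + ⟪x', z'⟫ := by
    rw [hx', hz']
    simp [inner_sub_left, inner_sub_right, inner_smul_left, inner_smul_right,
      real_inner_self_eq_norm_sq, hy, real_inner_comm x y, real_inner_comm z y]
    try ring
  have hCS : -(‖x'‖ * ‖z'‖) ≤ ⟪x', z'⟫ := neg_le_of_abs_le (abs_real_inner_le_norm x' z')
  have hcos_le : Real.cos (angle x y + angle y z) ≤ ⟪x, z⟫ := by
    rw [Real.cos_add, hcosa, hcosb, hsina, hsinb, hdec, real_inner_comm z y]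
    nlinarith [hCS]
  calc angle x z = Real.arccos ⟪x, z⟫ := angle_eq_arccos_unit hx hz
    _ ≤ Real.arccos (Real.cos (angle x y + angle y z)) :=
        by
          rw [Real.arccos_eq_pi_div_two_sub_arcsin, Real.arccos_eq_pi_div_two_sub_arcsin]
          have := Real.monotone_arcsin hcos_le
          linarith
    _ = angle x y + angle y z := Real.arccos_cos (by positivity) hp.le

lemma unit_angle_le_chord {x y : V} (hx : ‖x‖ = 1) (hy : ‖y‖ = 1) (hd : ‖x - y‖ ≤ 1) :
    angle x y ≤ ‖x - y‖ + ‖x - y‖ ^ 3 := by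
  set d := ‖x - y‖ with hdd
  have hd0 : 0 ≤ d := norm_nonneg _
  set θ := angle x y with hθ
  have hθ0 : 0 ≤ θ := angle_nonneg x y
  have hθπ : θ ≤ π := angle_le_pi x y
  have hcos : Real.cos θ = ⟪x, y⟫ := by rw [hθ, cos_angle, hx, hy]; norm_num
  have hd2 : d ^ 2 = 2 - 2 * ⟪x, y⟫ := by
    rw [hdd, @norm_sub_sq_real, hx, hy]; ring
  have hsin : Real.sin (θ / 2) = d / 2 := by
    rw [Real.sin_half_eq_sqrt hθ0 (by linarith [Real.pi_le_four] : θ ≤ 2 * π), hcos]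
    have : (1 - ⟪x, y⟫) / 2 = (d / 2) ^ 2 := by nlinarith
    rw [this, Real.sqrt_sq (by linarith)]
  rcases eq_or_lt_of_le hθ0 with h0 | h0
  · rw [← h0]; positivity
  have hhalf : θ / 2 ≤ 1 := by
    by_contra hgt
    push_neg at hgt
    have h1 : Real.sin 1 ≤ Real.sin (θ / 2) := by
      apply Real.sin_le_sin_of_le_of_le_pi_div_two (by linarith [Real.pi_pos]) (by linarith) hgt.le
    have h2 : (3 : ℝ) / 4 < Real.sin 1 := by
      have := Real.sin_gt_sub_cube one_pos
      norm_num at this ⊢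
      linarith
    rw [hsin] at h1
    linarith
  have hcube := Real.sin_gt_sub_cube (by linarith : 0 < θ / 2)
  rw [hsin] at hcube
  have hθd : θ ≤ 4 / 3 * d := by nlinarith [sq_nonneg (θ / 2)]
  nlinarith [pow_le_pow_left₀ hθ0 hθd 3, sq_nonneg d, pow_nonneg hθ0 3]


lemma angle_chain {q : ℕ → V} (hq : ∀ k, ‖q k‖ = 1) (m : ℕ) :
    angle (q 0) (q m) ≤ ∑ k ∈ Finset.range m, angle (q k) (q (k+1)) := by
  induction m with
  | zero =>
      have h0 : q 0 ≠ 0 := fun h => by simpa [h] using hq 0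
      simp [angle_self h0]
  | succ m ih =>
      rw [Finset.sum_range_succ]
      calc angle (q 0) (q (m+1)) ≤ angle (q 0) (q m) + angle (q m) (q (m+1)) :=
            unit_angle_triangle (hq 0) (hq m) (hq (m+1))
        _ ≤ _ := add_le_add_left ih _

end Geo

namespace AngAux

def T (v : E3) : E3 →L[ℝ] E3 := Matrix.toEuclideanCLM (𝕜 := ℝ) (skew v)

lemma skew_sub (a b : E3) : skew (a - b) = skew a - skew b := by
  ext i j
  fin_cases i <;> fin_cases j <;>
    simp [skew, PiLp.sub_apply] <;> ring

lemma T_sub (a b : E3) : T a - T b = T (a - b) := by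
  rw [T, T, T, skew_sub, map_sub]

lemma star_T (v : E3) : star (T v) = -(T v) := by
  rw [T, ← map_star, ← map_neg]
  congr 1
  ext i j
  fin_cases i <;> fin_cases j <;>
    simp [skew, Matrix.star_apply]

lemma rotApply_eq_clm (R : Matrix (Fin 3) (Fin 3) ℝ) (x : E3) :
    rotApply R x = Matrix.toEuclideanCLM (𝕜 := ℝ) R x := rfl

lemma norm_eq3 (y : E3) : ‖y‖ = Real.sqrt (y 0 ^ 2 + y 1 ^ 2 + y 2 ^ 2) := by
  rw [EuclideanSpace.norm_eq]
  congr 1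
  simp [Fin.sum_univ_three, sq_abs]

lemma T_apply_norm_le (v x : E3) : ‖T v x‖ ≤ ‖v‖ * ‖x‖ := by
  have h0 : T v x 0 = -(v 2) * x 1 + v 1 * x 2 := by
    have : T v x 0 = Matrix.mulVec (skew v) x 0 := rfl
    rw [this]
    simp [skew, Matrix.mulVec, dotProduct, Fin.sum_univ_three, Matrix.vecHead, Matrix.vecTail]
    try ring
  have h1 : T v x 1 = v 2 * x 0 + -(v 0) * x 2 := by
    have : T v x 1 = Matrix.mulVec (skew v) x 1 := rfl
    rw [this]
    simp [skew, Matrix.mulVec, dotProduct, Fin.sum_univ_three, Matrix.vecHead, Matrix.vecTail]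
    try ring
  have h2 : T v x 2 = -(v 1) * x 0 + v 0 * x 1 := by
    have : T v x 2 = Matrix.mulVec (skew v) x 2 := rfl
    rw [this]
    simp [skew, Matrix.mulVec, dotProduct, Fin.sum_univ_three, Matrix.vecHead, Matrix.vecTail]
    try ring
  rw [norm_eq3, norm_eq3 v, norm_eq3 x, h0, h1, h2, ← Real.sqrt_mul (by positivity)]
  apply Real.sqrt_le_sqrt
  nlinarith [sq_nonneg (v 0 * x 0 + v 1 * x 1 + v 2 * x 2), sq_nonneg (v 0), sq_nonneg (x 0)]


lemma norm_T_le (v : E3) : ‖T v‖ ≤ ‖v‖ :=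
  ContinuousLinearMap.opNorm_le_bound _ (norm_nonneg v) (T_apply_norm_le v)

open NormedSpace in
lemma exp_isometry {A : E3 →L[ℝ] E3} (hA : star A = -A) (x : E3) :
    ‖exp A x‖ = ‖x‖ := by
  have hmul : star (exp A) * exp A = 1 := by
    let +nondep : NormedAlgebra ℚ (E3 →L[ℝ] E3) := .restrictScalars ℚ ℝ _
    rw [star_exp, hA, ← exp_add_of_commute (Commute.neg_left (Commute.refl A))]
    simp [exp_zero]
  have hinner : (inner ℝ (exp A x) (exp A x) : ℝ) = inner ℝ x x := by
    calc (inner ℝ (exp A x) (exp A x) : ℝ)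
        = inner ℝ (ContinuousLinearMap.adjoint (exp A) (exp A x)) x :=
          (ContinuousLinearMap.adjoint_inner_left _ _ _).symm
      _ = (inner ℝ x x : ℝ) := by
          rw [← ContinuousLinearMap.star_eq_adjoint, ← ContinuousLinearMap.mul_apply, hmul,
            ContinuousLinearMap.one_apply]
  rw [real_inner_self_eq_norm_mul_norm, real_inner_self_eq_norm_mul_norm] at hinner
  nlinarith [norm_nonneg (exp A x), norm_nonneg x]

open NormedSpace in
lemma exp_norm_le_one {A : E3 →L[ℝ] E3} (hA : star A = -A) : ‖exp A‖ ≤ 1 :=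
  ContinuousLinearMap.opNorm_le_bound _ zero_le_one fun x => by
    rw [exp_isometry hA, one_mul]

lemma star_smul_T (t : ℝ) (v : E3) : star (t • T v) = -(t • T v) := by
  rw [star_smul, star_T, star_trivial, smul_neg]

open NormedSpace in
lemma exp_T_lipschitz (a b : E3) : ‖exp (T a) - exp (T b)‖ ≤ ‖a - b‖ := by
  set A := T a with hA
  set B := T b with hB
  set f : ℝ → (E3 →L[ℝ] E3) := fun t => exp (t • A) * exp ((1 - t) • B) with hf
  set f' : ℝ → (E3 →L[ℝ] E3) := fun t => exp (t • A) * (A - B) * exp ((1 - t) • B) with hf'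
  have hderiv : ∀ t : ℝ, HasDerivAt f (f' t) t := by
    intro t
    have h1 : HasDerivAt (fun t : ℝ => exp (t • A)) (exp (t • A) * A) t :=
      hasDerivAt_exp_smul_const A t
    have h3 : HasDerivAt (fun t : ℝ => (1 - t)) (-1) t := by
      simpa using (hasDerivAt_id t).const_sub 1
    have h2 : HasDerivAt (fun t : ℝ => exp ((1 - t) • B))
        (-(B * exp ((1 - t) • B))) t := by
      have h4 := (hasDerivAt_exp_smul_const' (𝕂 := ℝ) B (1 - t)).scomp t h3
      simpa [Function.comp_def] using h4
    have h5 := h1.mul h2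
    refine h5.congr_deriv ?_
    rw [hf']
    noncomm_ring
  have hbound : ∀ t ∈ Set.Ico (0:ℝ) 1, ‖f' t‖ ≤ ‖A - B‖ := by
    intro t _
    rw [hf']
    calc ‖exp (t • A) * (A - B) * exp ((1 - t) • B)‖
        ≤ ‖exp (t • A) * (A - B)‖ * ‖exp ((1 - t) • B)‖ := norm_mul_le _ _
      _ ≤ ‖exp (t • A)‖ * ‖A - B‖ * ‖exp ((1 - t) • B)‖ := by
          gcongr; exact norm_mul_le _ _
      _ ≤ 1 * ‖A - B‖ * 1 := by
          gcongr
          · exact exp_norm_le_one (star_smul_T t a)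
          · exact exp_norm_le_one (star_smul_T (1 - t) b)
      _ = ‖A - B‖ := by ring
  have hmvt := norm_image_sub_le_of_norm_deriv_le_segment_01'
    (fun t _ => (hderiv t).hasDerivWithinAt) hbound
  have hzA : ((0:ℝ) • A) = 0 := by ext x; simp
  have hzB : ((1 - 1 : ℝ) • B) = 0 := by ext x; simp
  have hoA : ((1:ℝ) • A) = A := by ext x; simp
  have hoB : ((1 - 0 : ℝ) • B) = B := by ext x; simp
  have hf1 : f 1 = exp A := by
    show exp ((1:ℝ) • A) * exp ((1 - 1 : ℝ) • B) = exp A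
    rw [hoA, hzB, exp_zero, mul_one]
  have hf0 : f 0 = exp B := by
    show exp ((0:ℝ) • A) * exp ((1 - 0 : ℝ) • B) = exp B
    rw [hzA, hoB, exp_zero, one_mul]
  rw [hf1, hf0] at hmvt
  calc ‖exp A - exp B‖ ≤ ‖A - B‖ := hmvt
    _ = ‖T (a - b)‖ := by rw [hA, hB, T_sub]
    _ ≤ ‖a - b‖ := norm_T_le _

open NormedSpace in
lemma exp_T_apply_dist (a b : E3) (x : E3) :
    ‖exp (T a) x - exp (T b) x‖ ≤ ‖a - b‖ * ‖x‖ := by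
  have h := (exp (T a) - exp (T b)).le_opNorm x
  rw [ContinuousLinearMap.sub_apply] at h
  exact h.trans (by gcongr; exact exp_T_lipschitz a b)

attribute [local instance] Matrix.linftyOpNormedRing Matrix.linftyOpNormedAlgebra in
lemma rotApply_exp (r : E3) (x : E3) :
    rotApply (axisAngleRot r) x = NormedSpace.exp (T r) x := by
  have hg : Continuous (fun M : Matrix (Fin 3) (Fin 3) ℝ => Matrix.toEuclideanCLM (𝕜 := ℝ) M) :=
    LinearMap.continuous_of_finiteDimensional
      ({ toFun := fun M => Matrix.toEuclideanCLM (𝕜 := ℝ) M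
         map_add' := fun M N => map_add _ M N
         map_smul' := fun c M => map_smul (Matrix.toEuclideanCLM (𝕜 := ℝ)) c M } :
        Matrix (Fin 3) (Fin 3) ℝ →ₗ[ℝ] (E3 →L[ℝ] E3))
  have h := NormedSpace.map_exp (Matrix.toEuclideanCLM (𝕜 := ℝ) (n := Fin 3)) hg (skew r)
  have : rotApply (axisAngleRot r) x = Matrix.toEuclideanCLM (𝕜 := ℝ) (axisAngleRot r) x := rfl
  rw [this, axisAngleRot, T]
  exact congrArg (fun L => L x) h

open NormedSpace in
lemma angle_exp_T_le (u r x : E3) (hx : ‖x‖ = 1) :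
    angle (exp (T u) x) (exp (T r) x) ≤ ‖u - r‖ := by
  set L := ‖u - r‖ with hLdef
  have hL0 : 0 ≤ L := norm_nonneg _
  apply le_of_forall_pos_le_add
  intro ε hε
  set n : ℕ := ⌈L⌉₊ + ⌈L ^ 3 / ε⌉₊ + 1 with hn
  have hn1 : 1 ≤ n := by omega
  have hnR : (1:ℝ) ≤ (n:ℝ) := by exact_mod_cast hn1
  have hnpos : (0:ℝ) < (n:ℝ) := by linarith
  have hLn : L ≤ (n:ℝ) := by
    have h1 : (⌈L⌉₊:ℝ) ≤ (n:ℝ) := by exact_mod_cast (by omega : ⌈L⌉₊ ≤ n)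
    exact (Nat.le_ceil L).trans h1
  have hcube : L ^ 3 / (n:ℝ) ≤ ε := by
    have h1 : L ^ 3 / ε ≤ (n:ℝ) := by
      have h0 : (⌈L ^ 3 / ε⌉₊:ℝ) ≤ (n:ℝ) := by exact_mod_cast (by omega : ⌈L ^ 3 / ε⌉₊ ≤ n)
      exact (Nat.le_ceil _).trans h0
    have h2 : (L ^ 3 / ε) * ε ≤ (n:ℝ) * ε := mul_le_mul_of_nonneg_right h1 hε.le
    rw [div_mul_cancel₀ _ (ne_of_gt hε)] at h2
    rw [div_le_iff₀ hnpos]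
    linarith
  have hne : (n:ℝ) ≠ 0 := ne_of_gt hnpos
  clear hn
  clear_value n
  set q : ℕ → E3 := fun k => exp (T (r + ((k:ℝ)/(n:ℝ)) • (u - r))) x with hq
  have hqnorm : ∀ k, ‖q k‖ = 1 := fun k => (exp_isometry (star_T _) x).trans hx
  have hq0 : q 0 = exp (T r) x := by
    rw [hq]; norm_num
  have hqn : q n = exp (T u) x := by
    rw [hq]
    have : ((n:ℝ)/(n:ℝ)) = 1 := by field_simp
    simp only [this, one_smul]
    norm_num
  have hchord : ∀ k, ‖q (k+1) - q k‖ ≤ L / n := by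
    intro k
    have h := exp_T_apply_dist (r + (((k:ℝ)+1)/(n:ℝ)) • (u - r)) (r + ((k:ℝ)/(n:ℝ)) • (u - r)) x
    have hdiff : (r + (((k:ℝ)+1)/(n:ℝ)) • (u - r)) - (r + ((k:ℝ)/(n:ℝ)) • (u - r))
        = ((1:ℝ)/(n:ℝ)) • (u - r) := by
      rw [add_sub_add_left_eq_sub, ← sub_smul]
      congr 1
      field_simp
      ring
    rw [hdiff, hx, mul_one] at h
    have hnorm1 : ‖((1:ℝ)/(n:ℝ)) • (u - r)‖ = L / n := by
      rw [norm_smul, Real.norm_eq_abs, abs_of_pos (by positivity), ← hLdef]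
      ring
    rw [hnorm1] at h
    simpa only [hq, Nat.cast_add, Nat.cast_one] using h
  have hLn1 : L / n ≤ 1 := by
    rw [div_le_one hnpos]; exact hLn
  have hang : ∀ k, angle (q k) (q (k+1)) ≤ L/n + (L/n)^3 := by
    intro k
    have h1 := unit_angle_le_chord (hqnorm k) (hqnorm (k+1))
      (le_trans (by rw [norm_sub_rev]; exact hchord k) hLn1)
    rw [norm_sub_rev] at h1
    refine h1.trans ?_
    gcongr <;> [exact hchord k; exact hchord k]
  have hsum := angle_chain hqnorm n
  have : (∑ k ∈ Finset.range n, angle (q k) (q (k+1))) ≤ n * (L/n + (L/n)^3) := by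
    calc (∑ k ∈ Finset.range n, angle (q k) (q (k+1)))
        ≤ ∑ k ∈ Finset.range n, (L/n + (L/n)^3) := Finset.sum_le_sum fun k _ => hang k
      _ = n * (L/n + (L/n)^3) := by rw [Finset.sum_const, Finset.card_range]; ring
  have hfinal : (n:ℝ) * (L/n + (L/n)^3) ≤ L + ε := by
    have h2 : (n:ℝ) * (L/n + (L/n)^3) = L + L^3/(n:ℝ)^2 := by
      field_simp
    rw [h2]
    have h3 : L^3/(n:ℝ)^2 ≤ L^3/(n:ℝ) := by
      rw [div_le_div_iff₀ (by positivity) hnpos]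
      have hnn : (n:ℝ) ≤ (n:ℝ)^2 := by nlinarith
      exact mul_le_mul_of_nonneg_left hnn (pow_nonneg hL0 3)
    linarith [hcube]
  rw [angle_comm, ← hq0, ← hqn]
  linarith [hsum, this]

end AngAux

/-- The bound `Q̄(B)` dominates `Q(R_r)` for every rotation `R_r` with `r` in the cube `B`,
i.e. `Q̄(B) ≥ max_{r ∈ B} Q(R_r)`. -/
theorem upper_bound_Q_ang (N M : ℕ) (s : Fin N → E3) (c : Fin M → E3)
    (hs : ∀ i, ‖s i‖ = 1) (hc : ∀ j, ‖c j‖ = 1)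
    (αε : ℝ) (hαε : 0 < αε)
    (B : Set E3) (u : E3) (αB : ℝ) (hB : ∀ r ∈ B, ‖r - u‖ ≤ αB) :
    ∀ r ∈ B,
      (∑ i : Fin N, Finset.univ.sup fun j : Fin M =>
          if angle (rotApply (axisAngleRot r) (s i)) (c j) ≤ αε then (1 : ℕ) else 0) ≤
      ∑ i : Fin N, Finset.univ.sup fun j : Fin M =>
          if angle (rotApply (axisAngleRot u) (s i)) (c j) ≤ αε + αB then (1 : ℕ) else 0 := by
  intro r hr
  apply Finset.sum_le_sum
  intro i _
  apply Finset.sup_le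
  intro j _
  by_cases hP : angle (rotApply (axisAngleRot r) (s i)) (c j) ≤ αε
  · rw [if_pos hP]
    have hu1 : ‖rotApply (axisAngleRot u) (s i)‖ = 1 := by
      rw [AngAux.rotApply_exp]
      rw [AngAux.exp_isometry (AngAux.star_T u)]
      exact hs i
    have hr1 : ‖rotApply (axisAngleRot r) (s i)‖ = 1 := by
      rw [AngAux.rotApply_exp]
      rw [AngAux.exp_isometry (AngAux.star_T r)]
      exact hs i
    have h1 : angle (rotApply (axisAngleRot u) (s i)) (rotApply (axisAngleRot r) (s i)) ≤ αB := by
      rw [AngAux.rotApply_exp, AngAux.rotApply_exp]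
      refine (AngAux.angle_exp_T_le u r (s i) (hs i)).trans ?_
      rw [norm_sub_rev]
      exact hB r hr
    have htri := unit_angle_triangle hu1 hr1 (hc j)
    have hang : angle (rotApply (axisAngleRot u) (s i)) (c j) ≤ αε + αB := by linarith
    have hle := Finset.le_sup (f := fun j : Fin M =>
      if angle (rotApply (axisAngleRot u) (s i)) (c j) ≤ αε + αB then (1 : ℕ) else 0)
      (Finset.mem_univ j)
    simp only [if_pos hang] at hle
    exact hle
  · rw [if_neg hP]
    exact Nat.zero_le _
end
end

section
/- With the triplet-constrained objective Q_ROSIA(R) = Σ_i max_j ([∠(R s_i, c_j) ≤ α_ε] · Π_{k=1}^K [|θ_k^{(i)} − φ_k^{(j)}| ≤ 2α_ε]) and bound Q̄_ROSIA(B) = Σ_i max_j ([∠(R_u s_i, c_j) ≤ α_ε + α_B] · Π_{k=1}^K [|θ_k^{(i)} − φ_k^{(j)}| ≤ 2α_ε]), for any cube B with center u and half-diagonal α_B one has Q̄_ROSIA(B) ≥ max_{r ∈ B} Q_ROSIA(R_r). -/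
open scoped Matrix
open InnerProductGeometry
noncomputable section

/-! ### Auxiliary lemmas -/

open Real Filter Topology
open scoped RealInnerProductSpace

section Aux

attribute [local instance] Matrix.linftyOpNormedRing Matrix.linftyOpNormedAlgebra

lemma skew_smul (a : ℝ) (v : E3) : skew (a • v) = a • skew v := by
  ext i j; fin_cases i <;> fin_cases j <;>
    simp [skew, PiLp.smul_apply, smul_eq_mul]

lemma skew_transpose (v : E3) : (skew v)ᵀ = - skew v := by
  ext i j; fin_cases i <;> fin_cases j <;> simp [skew]

lemma skew_sub (x y : E3) : skew x - skew y = skew (x - y) := by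
  ext i j; fin_cases i <;> fin_cases j <;> simp [skew] <;> ring

lemma axisAngleRot_orth (v : E3) : (axisAngleRot v)ᵀ * axisAngleRot v = 1 := by
  rw [axisAngleRot, ← Matrix.exp_transpose, skew_transpose,
    ← Matrix.exp_add_of_commute _ _ (Commute.refl (skew v)).neg_left]
  simp [NormedSpace.exp_zero]

lemma norm_rotApply (v : E3) (z : E3) : ‖rotApply (axisAngleRot v) z‖ = ‖z‖ := by
  have key : (axisAngleRot v).mulVec z ⬝ᵥ (axisAngleRot v).mulVec z = (z : Fin 3 → ℝ) ⬝ᵥ z := by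
    rw [Matrix.dotProduct_mulVec, ← Matrix.mulVec_transpose, Matrix.mulVec_mulVec,
      axisAngleRot_orth, Matrix.one_mulVec]
  have h1 : ∀ z : E3, ‖z‖ = Real.sqrt ((z : Fin 3 → ℝ) ⬝ᵥ z) := by
    intro z
    rw [EuclideanSpace.norm_eq]; congr 1
    simp [dotProduct, Real.norm_eq_abs, sq_abs, sq]
  rw [h1, h1]
  exact congrArg Real.sqrt key

lemma norm_skew_mulVec (v w : E3) : ‖rotApply (skew v) w‖ ≤ ‖v‖ * ‖w‖ := by
  have hv : ‖v‖ = Real.sqrt (v 0 ^ 2 + v 1 ^ 2 + v 2 ^ 2) := by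
    rw [EuclideanSpace.norm_eq]; congr 1
    simp [Fin.sum_univ_three, Real.norm_eq_abs, sq_abs]
  have hw : ‖w‖ = Real.sqrt (w 0 ^ 2 + w 1 ^ 2 + w 2 ^ 2) := by
    rw [EuclideanSpace.norm_eq]; congr 1
    simp [Fin.sum_univ_three, Real.norm_eq_abs, sq_abs]
  have hvw : ‖rotApply (skew v) w‖ = Real.sqrt ((-(v 2 * w 1) + v 1 * w 2) ^ 2 +
      (v 2 * w 0 - v 0 * w 2) ^ 2 + (-(v 1 * w 0) + v 0 * w 1) ^ 2) := by
    rw [EuclideanSpace.norm_eq]; congr 1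
    simp [Fin.sum_univ_three, Real.norm_eq_abs, sq_abs, rotApply, skew, Matrix.mulVec,
      dotProduct, Fin.sum_univ_three]
    ring
  rw [hv, hw, hvw, ← Real.sqrt_mul (by positivity)]
  apply Real.sqrt_le_sqrt
  nlinarith [sq_nonneg (v 0 * w 0 + v 1 * w 1 + v 2 * w 2)]

/-- `M ↦ M.mulVec s` as a continuous linear map into `E3`. -/
def mulVecCLM (s : E3) : Matrix (Fin 3) (Fin 3) ℝ →L[ℝ] E3 :=
  LinearMap.toContinuousLinearMap
    { toFun := fun M => rotApply M s
      map_add' := fun A B => by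
        apply (EuclideanSpace.equiv (Fin 3) ℝ).injective
        simp [rotApply, Matrix.add_mulVec]
      map_smul' := fun a A => by
        apply (EuclideanSpace.equiv (Fin 3) ℝ).injective
        simp [rotApply, Matrix.smul_mulVec] }

lemma rotApply_mul (A B : Matrix (Fin 3) (Fin 3) ℝ) (s : E3) :
    rotApply (A * B) s = rotApply A (rotApply B s) := by
  apply (EuclideanSpace.equiv (Fin 3) ℝ).injective
  simp [rotApply, Matrix.mulVec_mulVec]
  rw [← Matrix.mulVec_mulVec]; rfl

/-- Chord bound: the exponential map composed with `mulVec` is `1`-Lipschitz. -/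
lemma chord_bound (x y s : E3) :
    ‖rotApply (axisAngleRot x) s - rotApply (axisAngleRot y) s‖ ≤ ‖x - y‖ * ‖s‖ := by
  set X := skew x
  set Y := skew y
  set h : ℝ → E3 := fun τ =>
    mulVecCLM s (NormedSpace.exp (τ • X) * NormedSpace.exp ((1 - τ) • Y))
  have hderiv : ∀ τ : ℝ, HasDerivAt h
      (mulVecCLM s (NormedSpace.exp (τ • X) * (X - Y) * NormedSpace.exp ((1 - τ) • Y))) τ := by
    intro τ
    have h1 : HasDerivAt (fun τ : ℝ => NormedSpace.exp (τ • X))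
        (NormedSpace.exp (τ • X) * X) τ := hasDerivAt_exp_smul_const X τ
    have h2 : HasDerivAt (fun τ : ℝ => NormedSpace.exp ((1 - τ) • Y))
        ((-1 : ℝ) • (NormedSpace.exp ((1 - τ) • Y) * Y)) τ := by
      have := (hasDerivAt_exp_smul_const Y (1 - τ)).scomp τ
        ((hasDerivAt_id τ).const_sub 1)
      exact this
    have hmul := h1.mul h2
    have := ((mulVecCLM s).hasFDerivAt.comp_hasDerivAt τ hmul)
    refine this.congr_deriv (Eq.symm ?_)
    congr 1
    have hcY : Commute (NormedSpace.exp ((1 - τ) • Y)) Y :=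
      ((Commute.refl Y).smul_left (1 - τ)).exp_left
    simp only [smul_eq_mul, neg_one_mul, mul_neg, smul_neg, neg_smul, one_smul]
    rw [mul_sub, sub_mul, hcY.eq, sub_eq_add_neg, ← mul_assoc]
  have hbound : ∀ τ ∈ Set.Icc (0:ℝ) 1,
      ‖mulVecCLM s (NormedSpace.exp (τ • X) * (X - Y) * NormedSpace.exp ((1 - τ) • Y))‖
        ≤ ‖x - y‖ * ‖s‖ := by
    intro τ _
    have e1 : mulVecCLM s (NormedSpace.exp (τ • X) * (X - Y) * NormedSpace.exp ((1 - τ) • Y))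
        = rotApply (NormedSpace.exp (τ • X))
            (rotApply (X - Y) (rotApply (NormedSpace.exp ((1 - τ) • Y)) s)) := by
      show rotApply _ s = _
      rw [rotApply_mul, rotApply_mul]
    rw [e1]
    have e2 : NormedSpace.exp (τ • X) = axisAngleRot (τ • x) := by
      rw [axisAngleRot, skew_smul]
    have e3 : NormedSpace.exp ((1 - τ) • Y) = axisAngleRot ((1 - τ) • y) := by
      rw [axisAngleRot, skew_smul]
    rw [e2, e3, norm_rotApply, skew_sub]
    calc ‖rotApply (skew (x - y)) (rotApply (axisAngleRot ((1 - τ) • y)) s)‖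
        ≤ ‖x - y‖ * ‖rotApply (axisAngleRot ((1 - τ) • y)) s‖ := norm_skew_mulVec _ _
      _ = ‖x - y‖ * ‖s‖ := by rw [norm_rotApply]
  have key := norm_image_sub_le_of_norm_deriv_le_segment'
    (f := h) (C := ‖x - y‖ * ‖s‖)
    (fun τ _ => (hderiv τ).hasDerivWithinAt)
    (fun τ hτ => hbound τ (Set.Ico_subset_Icc_self hτ)) 1 (Set.right_mem_Icc.2 zero_le_one)
  have h1 : h 1 = rotApply (axisAngleRot x) s := by
    show rotApply _ s = _
    simp [axisAngleRot, NormedSpace.exp_zero]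
    rfl
  have h0 : h 0 = rotApply (axisAngleRot y) s := by
    show rotApply _ s = _
    simp [axisAngleRot, NormedSpace.exp_zero]
    rfl
  rw [h1, h0] at key
  simpa using key

variable {V : Type*} [NormedAddCommGroup V] [InnerProductSpace ℝ V]

lemma arccos_le_arccos' {x y : ℝ} (h : x ≤ y) : Real.arccos y ≤ Real.arccos x := by
  unfold Real.arccos
  exact sub_le_sub_left (Real.monotone_arcsin h) _

lemma angle_triangle_unit (x y z : V) (hx : ‖x‖ = 1) (hy : ‖y‖ = 1) (hz : ‖z‖ = 1) :
    angle x z ≤ angle x y + angle y z := by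
  by_cases hπ : π ≤ angle x y + angle y z
  · exact le_trans (angle_le_pi x z) hπ
  push_neg at hπ
  obtain ⟨a, ha⟩ : ∃ a, ⟪x, y⟫ = a := ⟨_, rfl⟩
  obtain ⟨b, hb⟩ : ∃ b, ⟪y, z⟫ = b := ⟨_, rfl⟩
  obtain ⟨t, ht⟩ : ∃ t, ⟪x, z⟫ = t := ⟨_, rfl⟩
  have hxy : angle x y = arccos a := by rw [angle, hx, hy, one_mul, div_one, ha]
  have hyz : angle y z = arccos b := by rw [angle, hy, hz, one_mul, div_one, hb]
  have hxz : angle x z = arccos t := by rw [angle, hx, hz, one_mul, div_one, ht]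
  have ha1 : |a| ≤ 1 := by
    have := abs_real_inner_le_norm x y; rw [hx, hy, ha] at this; simpa using this
  have hb1 : |b| ≤ 1 := by
    have := abs_real_inner_le_norm y z; rw [hy, hz, hb] at this; simpa using this
  obtain ⟨ha1l, ha1r⟩ := abs_le.1 ha1
  obtain ⟨hb1l, hb1r⟩ := abs_le.1 hb1
  have key : a * b - Real.sqrt (1 - a ^ 2) * Real.sqrt (1 - b ^ 2) ≤ t := by
    have hyy : ⟪y, y⟫ = 1 := by
      rw [real_inner_self_eq_norm_sq, hy]; norm_num
    have hxx : ⟪x, x⟫ = 1 := by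
      rw [real_inner_self_eq_norm_sq, hx]; norm_num
    have hzz : ⟪z, z⟫ = 1 := by
      rw [real_inner_self_eq_norm_sq, hz]; norm_num
    have hyx : ⟪y, x⟫ = a := by rw [real_inner_comm, ha]
    have hzy : ⟪z, y⟫ = b := by rw [real_inner_comm, hb]
    have hinner : ⟪x - a • y, z - b • y⟫ = t - a * b := by
      simp only [inner_sub_left, inner_sub_right, real_inner_smul_left,
        real_inner_smul_right, hyy, ha, hb, ht, hyx, hzy]
      ring
    have hxx' : ⟪x - a • y, x - a • y⟫ = 1 - a ^ 2 := by
      simp only [inner_sub_left, inner_sub_right, real_inner_smul_left,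
        real_inner_smul_right, hyy, ha, hyx, hxx]
      ring
    have hzz' : ⟪z - b • y, z - b • y⟫ = 1 - b ^ 2 := by
      simp only [inner_sub_left, inner_sub_right, real_inner_smul_left,
        real_inner_smul_right, hyy, hb, hzy, hzz]
      ring
    have hnx' : ‖x - a • y‖ = Real.sqrt (1 - a ^ 2) := by
      rw [← Real.sqrt_sq (norm_nonneg (x - a • y)), ← real_inner_self_eq_norm_sq, hxx']
    have hnz' : ‖z - b • y‖ = Real.sqrt (1 - b ^ 2) := by
      rw [← Real.sqrt_sq (norm_nonneg (z - b • y)), ← real_inner_self_eq_norm_sq, hzz']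
    have hcs := abs_real_inner_le_norm (x - a • y) (z - b • y)
    rw [hinner, hnx', hnz'] at hcs
    linarith [abs_le.1 hcs]
  have hcos : Real.cos (arccos a + arccos b)
      = a * b - Real.sqrt (1 - a ^ 2) * Real.sqrt (1 - b ^ 2) := by
    rw [Real.cos_add, Real.cos_arccos ha1l ha1r, Real.cos_arccos hb1l hb1r,
      Real.sin_arccos, Real.sin_arccos]
  rw [hxy, hyz] at hπ ⊢
  rw [hxz]
  calc arccos t ≤ arccos (Real.cos (arccos a + arccos b)) := by
        rw [hcos]; exact arccos_le_arccos' key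
    _ = arccos a + arccos b := by
        rw [Real.arccos_cos (add_nonneg (Real.arccos_nonneg a) (Real.arccos_nonneg b)) hπ.le]

lemma angle_le_two_arcsin (x y : V) (hx : ‖x‖ = 1) (hy : ‖y‖ = 1) :
    angle x y ≤ 2 * Real.arcsin (‖x - y‖ / 2) := by
  obtain ⟨d, hd⟩ : ∃ d, ‖x - y‖ / 2 = d := ⟨_, rfl⟩
  have hd0 : 0 ≤ d := by rw [← hd]; positivity
  have hinner : ⟪x, y⟫ = 1 - 2 * d ^ 2 := by
    have h := norm_sub_sq_real x y
    rw [hx, hy] at h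
    have h2 : ‖x - y‖ ^ 2 = (2 * d) ^ 2 := by rw [← hd]; ring
    rw [h2] at h
    nlinarith
  have hd1 : d ≤ 1 := by
    have h1 : |⟪x, y⟫| ≤ 1 := by
      have := abs_real_inner_le_norm x y; rw [hx, hy] at this; simpa using this
    rw [hinner] at h1
    nlinarith [abs_le.1 h1]
  have hang : angle x y = arccos (1 - 2 * d ^ 2) := by
    rw [angle, hx, hy, one_mul, div_one, hinner]
  rw [hang, hd]
  have harc : Real.cos (2 * arcsin d) = 1 - 2 * d ^ 2 := by
    rw [Real.cos_two_mul', Real.sin_arcsin (by linarith) hd1, Real.cos_arcsin,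
      Real.sq_sqrt (by nlinarith)]
    ring
  rw [← harc, Real.arccos_cos]
  · have := Real.arcsin_nonneg.2 hd0; linarith
  · have := Real.arcsin_le_pi_div_two d; linarith

lemma tendsto_subdiv (a : ℝ) (ha : 0 < a) :
    Tendsto (fun n : ℕ => ((n : ℝ) + 1) * (2 * arcsin (a / (2 * ((n : ℝ) + 1))))) atTop (𝓝 a) := by
  have hslope : Tendsto (slope arcsin 0) (𝓝[≠] 0) (𝓝 1) := by
    have h := Real.hasDerivAt_arcsin (by norm_num : (0:ℝ) ≠ -1) (by norm_num : (0:ℝ) ≠ 1)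
    rw [hasDerivAt_iff_tendsto_slope] at h
    simpa using h
  have hh : Tendsto (fun n : ℕ => a / (2 * ((n : ℝ) + 1))) atTop (𝓝[≠] 0) := by
    apply tendsto_nhdsWithin_of_tendsto_nhds_of_eventually_within
    · have := tendsto_one_div_add_atTop_nhds_zero_nat.const_mul (a / 2)
      simp only [mul_zero] at this
      convert this using 2 with n
      field_simp
    · filter_upwards with n
      have : (0:ℝ) < a / (2 * ((n : ℝ) + 1)) := by positivity
      exact Set.mem_compl_singleton_iff.2 (ne_of_gt this)
  have hcomp : Tendsto (fun n : ℕ => slope arcsin 0 (a / (2 * ((n : ℝ) + 1)))) atTop (𝓝 1) :=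
    hslope.comp hh
  have heq : ∀ n : ℕ, ((n : ℝ) + 1) * (2 * arcsin (a / (2 * ((n : ℝ) + 1))))
      = a * slope arcsin 0 (a / (2 * ((n : ℝ) + 1))) := by
    intro n
    have hn : (0:ℝ) < (n : ℝ) + 1 := by positivity
    rw [slope_def_field, Real.arcsin_zero, sub_zero, sub_zero]
    have ha' : a ≠ 0 := ne_of_gt ha
    have hn' : ((n:ℝ) + 1) ≠ 0 := ne_of_gt hn
    field_simp
  have := hcomp.const_mul a
  rw [mul_one] at this
  exact this.congr (fun n => (heq n).symm)

/-- The angular distance between the images of `s` under two axis-angle rotations is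
bounded by the distance between the rotation vectors. -/
lemma angle_rot_le (x y s : E3) (hs : ‖s‖ = 1) :
    angle (rotApply (axisAngleRot x) s) (rotApply (axisAngleRot y) s) ≤ ‖x - y‖ := by
  rcases eq_or_lt_of_le (norm_nonneg (x - y)) with h0 | ha
  · have hxy : x = y := by
      have := (norm_eq_zero.mp h0.symm)
      exact sub_eq_zero.mp this
    subst hxy
    have hne : rotApply (axisAngleRot x) s ≠ 0 := by
      intro h
      rw [← norm_eq_zero, norm_rotApply, hs] at h
      norm_num at h
    rw [angle_self hne]
    positivity
  · obtain ⟨a, haa⟩ : ∃ a, ‖x - y‖ = a := ⟨_, rfl⟩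
    rw [haa] at ha ⊢
    set g : ℝ → E3 := fun t => rotApply (axisAngleRot (x + t • (y - x))) s with hg
    have hgu : ∀ t, ‖g t‖ = 1 := fun t => by rw [hg]; simp only; rw [norm_rotApply, hs]
    have hchord : ∀ t₁ t₂ : ℝ, ‖g t₁ - g t₂‖ ≤ |t₁ - t₂| * a := by
      intro t₁ t₂
      have h := chord_bound (x + t₁ • (y - x)) (x + t₂ • (y - x)) s
      calc ‖g t₁ - g t₂‖ ≤ ‖(x + t₁ • (y - x)) - (x + t₂ • (y - x))‖ * ‖s‖ := h
        _ = |t₁ - t₂| * a := by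
            rw [hs, mul_one]
            have e : (x + t₁ • (y - x)) - (x + t₂ • (y - x)) = (t₁ - t₂) • (y - x) := by
              rw [sub_smul]; abel
            rw [e, norm_smul, Real.norm_eq_abs, ← haa, norm_sub_rev]
    have hg0 : g 0 = rotApply (axisAngleRot x) s := by simp [hg]
    have hg1 : g 1 = rotApply (axisAngleRot y) s := by simp [hg]
    have hstep : ∀ n : ℕ, ∀ m : ℕ,
        angle (g 0) (g ((m : ℝ) / ((n:ℝ) + 1)))
          ≤ m * (2 * arcsin (a / (2 * ((n:ℝ) + 1)))) := by
      intro n m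
      induction m with
      | zero =>
          have hne : g 0 ≠ 0 := by
            intro h; rw [← norm_eq_zero, hgu 0] at h; norm_num at h
          simp [angle_self hne]
      | succ m ih =>
          have tri := angle_triangle_unit (g 0) (g ((m : ℝ)/((n:ℝ)+1)))
            (g (((m : ℝ)+1)/((n:ℝ)+1))) (hgu _) (hgu _) (hgu _)
          have hstep1 : angle (g ((m : ℝ)/((n:ℝ)+1))) (g (((m : ℝ)+1)/((n:ℝ)+1)))
              ≤ 2 * arcsin (a/(2*((n:ℝ)+1))) := by
            have h1 := angle_le_two_arcsin (g ((m : ℝ)/((n:ℝ)+1))) (g (((m : ℝ)+1)/((n:ℝ)+1)))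
              (hgu _) (hgu _)
            have hn : (0:ℝ) < (n:ℝ) + 1 := by positivity
            have habs : |(m:ℝ)/((n:ℝ)+1) - ((m:ℝ)+1)/((n:ℝ)+1)| = 1/((n:ℝ)+1) := by
              rw [div_sub_div_same]
              have : (m:ℝ) - ((m:ℝ)+1) = -1 := by ring
              rw [this, abs_div, abs_neg, abs_one, abs_of_pos hn]
            have h2 := hchord ((m:ℝ)/((n:ℝ)+1)) (((m:ℝ)+1)/((n:ℝ)+1))
            rw [habs] at h2
            have h3 : ‖g ((m : ℝ)/((n:ℝ)+1)) - g (((m : ℝ)+1)/((n:ℝ)+1))‖ / 2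
                ≤ a / (2*((n:ℝ)+1)) := by
              rw [div_le_div_iff₀ (by norm_num) (by positivity)]
              calc ‖g ((m : ℝ)/((n:ℝ)+1)) - g (((m : ℝ)+1)/((n:ℝ)+1))‖ * (2*((n:ℝ)+1))
                  ≤ (1/((n:ℝ)+1) * a) * (2*((n:ℝ)+1)) := by
                    apply mul_le_mul_of_nonneg_right h2 (by positivity)
                _ = a * 2 := by field_simp
            calc angle (g ((m : ℝ)/((n:ℝ)+1))) (g (((m : ℝ)+1)/((n:ℝ)+1)))
                ≤ 2 * arcsin (‖g ((m : ℝ)/((n:ℝ)+1)) - g (((m : ℝ)+1)/((n:ℝ)+1))‖ / 2) := h1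
              _ ≤ 2 * arcsin (a/(2*((n:ℝ)+1))) := by
                  have := Real.monotone_arcsin h3
                  linarith
          push_cast
          calc angle (g 0) (g (((m : ℝ)+1)/((n:ℝ)+1)))
              ≤ angle (g 0) (g ((m : ℝ)/((n:ℝ)+1)))
                + angle (g ((m : ℝ)/((n:ℝ)+1))) (g (((m : ℝ)+1)/((n:ℝ)+1))) := tri
            _ ≤ ((m:ℝ) + 1) * (2 * arcsin (a / (2 * ((n:ℝ) + 1)))) := by
                have harcnn : 0 ≤ arcsin (a / (2 * ((n:ℝ) + 1))) :=
                  Real.arcsin_nonneg.2 (by positivity)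
                nlinarith [ih, hstep1]
    have hfin : ∀ n : ℕ, angle (g 0) (g 1) ≤ ((n:ℝ)+1) * (2*arcsin (a/(2*((n:ℝ)+1)))) := by
      intro n
      have h := hstep n (n+1)
      have hn : ((n:ℝ) + 1) ≠ 0 := by positivity
      rw [show ((n+1 : ℕ) : ℝ)/((n:ℝ)+1) = 1 by push_cast; field_simp] at h
      calc angle (g 0) (g 1) ≤ ((n+1 : ℕ) : ℝ) * (2 * arcsin (a / (2 * ((n:ℝ) + 1)))) := h
        _ = ((n:ℝ)+1) * (2*arcsin (a/(2*((n:ℝ)+1)))) := by push_cast; ring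
    have hres := ge_of_tendsto' (tendsto_subdiv a ha) hfin
    rw [hg0, hg1] at hres
    exact hres

end Aux

/-- The triplet-constrained bound `Q̄_ROSIA(B)` dominates `Q_ROSIA(R_r)` for every `r` in the
cube `B`, i.e. `Q̄_ROSIA(B) ≥ max_{r ∈ B} Q_ROSIA(R_r)`. -/
theorem upper_bound_Q_ROSIA (N M K : ℕ) (s : Fin N → E3) (c : Fin M → E3)
    (hs : ∀ i, ‖s i‖ = 1) (hc : ∀ j, ‖c j‖ = 1)
    (θ : Fin N → Fin K → ℝ) (φv : Fin M → Fin K → ℝ)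
    (αε : ℝ) (hαε : 0 < αε)
    (B : Set E3) (u : E3) (αB : ℝ) (hB : ∀ r ∈ B, ‖r - u‖ ≤ αB) :
    ∀ r ∈ B,
      (∑ i : Fin N, Finset.univ.sup fun j : Fin M =>
          (if angle (rotApply (axisAngleRot r) (s i)) (c j) ≤ αε then (1 : ℕ) else 0) *
            ∏ k : Fin K, if |θ i k - φv j k| ≤ 2 * αε then (1 : ℕ) else 0) ≤
      ∑ i : Fin N, Finset.univ.sup fun j : Fin M =>
          (if angle (rotApply (axisAngleRot u) (s i)) (c j) ≤ αε + αB then (1 : ℕ) else 0) *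
            ∏ k : Fin K, if |θ i k - φv j k| ≤ 2 * αε then (1 : ℕ) else 0 := by
  intro r hr
  apply Finset.sum_le_sum
  intro i _
  apply Finset.sup_le
  intro j _
  refine le_trans ?_ (Finset.le_sup (Finset.mem_univ j))
  by_cases hA : angle (rotApply (axisAngleRot r) (s i)) (c j) ≤ αε
  · have hA' : angle (rotApply (axisAngleRot u) (s i)) (c j) ≤ αε + αB := by
      have tri := angle_triangle_unit (rotApply (axisAngleRot u) (s i))
        (rotApply (axisAngleRot r) (s i)) (c j)
        (by rw [norm_rotApply, hs]) (by rw [norm_rotApply, hs]) (hc j)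
      have hrot := angle_rot_le u r (s i) (hs i)
      have hru : ‖u - r‖ ≤ αB := by rw [norm_sub_rev]; exact hB r hr
      linarith
    rw [if_pos hA, if_pos hA']
  · rw [if_neg hA, zero_mul]
    exact Nat.zero_le _
end
end
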